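/- Let W and V be r×r real symmetric positive definite matrices. Let U ∈ St(r,p₁) with orthonormal completion U⊥, and V₀ ∈ St(r,p₂) with orthonormal completion V₀⊥. Let P₁, P₂ ∈ ℝ^{r×r} be invertible and set L := UP₁, R := V₀P₂. For S ∈ ℝ^{r×r}, D₁ ∈ ℝ^{(p₁−r)×r}, D₂ ∈ ℝ^{(p₂−r)×r}, define θ_L := (U S P₂ W⁻¹ P₂ᵀ + U⊥D₁) P₂⁻ᵀ and θ_R := (V₀ Sᵀ P₁ V⁻¹ P₁ᵀ + V₀⊥D₂) P₁⁻ᵀ. Set g := tr(W θ_Lᵀθ_L) + tr(V θ_Rᵀθ_R), γ := min(λmin(P₂ W⁻¹ P₂ᵀ), λmin(P₁ V⁻¹ P₁ᵀ)) and Γ := max(λmax(P₂ W⁻¹ P₂ᵀ), λmax(P₁ V⁻¹ P₁ᵀ)). Then γ·g ≤ ‖L θ_Rᵀ + θ_L Rᵀ‖_F² ≤ 2Γ·g. -/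

import Mathlib

open Matrix

/-- The smallest eigenvalue of a (Hermitian) real matrix; junk value `0` otherwise. -/
noncomputable def eigMin {n : ℕ} (M : Matrix (Fin n) (Fin n) ℝ) : ℝ := by
  classical exact if h : M.IsHermitian then ⨅ i, h.eigenvalues i else 0

/-- The largest eigenvalue of a (Hermitian) real matrix; junk value `0` otherwise. -/
noncomputable def eigMax {n : ℕ} (M : Matrix (Fin n) (Fin n) ℝ) : ℝ := by
  classical exact if h : M.IsHermitian then ⨆ i, h.eigenvalues i else 0

/-- The squared Frobenius norm `‖A‖_F² = tr(AᵀA)`. -/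
noncomputable def frobSq {m n : ℕ} (A : Matrix (Fin m) (Fin n) ℝ) : ℝ :=
  Matrix.trace (Aᵀ * A)



open Matrix

namespace Stmt12Aux

lemma ctt {m n : ℕ} (M : Matrix (Fin m) (Fin n) ℝ) : Mᴴ = Mᵀ := by
  ext i j; simp [Matrix.conjTranspose_apply]

lemma trace_psd_nonneg {n : ℕ} {M : Matrix (Fin n) (Fin n) ℝ} (hM : M.PosSemidef) :
    0 ≤ M.trace := by
  rw [Matrix.trace]
  refine Finset.sum_nonneg fun i _ => ?_
  exact hM.diag_nonneg

lemma trace_mul_psd_nonneg {n : ℕ} {M N : Matrix (Fin n) (Fin n) ℝ}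
    (hM : M.PosSemidef) (hN : N.PosSemidef) : 0 ≤ (M * N).trace := by
  obtain ⟨B, rfl⟩ : ∃ B : Matrix (Fin n) (Fin n) ℝ, N = star B * B := by
    open scoped MatrixOrder in exact CStarAlgebra.nonneg_iff_eq_star_mul_self.mp hN.nonneg
  rw [← Matrix.mul_assoc, Matrix.trace_mul_comm, ← Matrix.mul_assoc]
  exact trace_psd_nonneg (hM.mul_mul_conjTranspose_same B)

lemma psd_tt {m n : ℕ} (D : Matrix (Fin m) (Fin n) ℝ) : (Dᵀ * D).PosSemidef := by
  have := Matrix.posSemidef_conjTranspose_mul_self D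
  rwa [ctt] at this

lemma psd_conj {n m : ℕ} {M : Matrix (Fin n) (Fin n) ℝ} (hM : M.PosSemidef)
    (C : Matrix (Fin m) (Fin n) ℝ) : (C * M * Cᵀ).PosSemidef := by
  have := hM.mul_mul_conjTranspose_same C
  rwa [ctt] at this

lemma quadPSD {n : ℕ} {A : Matrix (Fin n) (Fin n) ℝ} (hA : A.IsHermitian) (c₀ c₁ c₂ : ℝ)
    (h : ∀ i, 0 ≤ c₀ + c₁ * hA.eigenvalues i + c₂ * hA.eigenvalues i ^ 2) :
    (c₀ • (1 : Matrix (Fin n) (Fin n) ℝ) + c₁ • A + c₂ • (A * A)).PosSemidef := by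
  set U : Matrix (Fin n) (Fin n) ℝ := (hA.eigenvectorUnitary : Matrix (Fin n) (Fin n) ℝ) with hUdef
  have hU : U * star U = 1 := (Matrix.mem_unitaryGroup_iff).mp hA.eigenvectorUnitary.2
  have hdiag : star U * A * U = Matrix.diagonal hA.eigenvalues := by
    have := hA.conjStarAlgAut_star_eigenvectorUnitary
    rw [Unitary.conjStarAlgAut_star_apply] at this
    simpa [RCLike.ofReal_real_eq_id] using this
  have hsand : ∀ M : Matrix (Fin n) (Fin n) ℝ, U * (star U * M * U) * star U = M := by
    intro M
    calc U * (star U * M * U) * star U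
        = (U * star U) * M * (U * star U) := by
          simp only [Matrix.mul_assoc]
      _ = M := by rw [hU, Matrix.one_mul, Matrix.mul_one]
  have hAA : star U * (A * A) * U = Matrix.diagonal hA.eigenvalues * Matrix.diagonal hA.eigenvalues := by
    have h1 : A * A = (A * U) * (star U * A) := by
      rw [Matrix.mul_assoc, ← Matrix.mul_assoc U, hU, Matrix.one_mul]
    calc star U * (A * A) * U = (star U * A * U) * (star U * A * U) := by
          rw [h1]; simp only [Matrix.mul_assoc]
      _ = _ := by rw [hdiag]
  have key : star U * (c₀ • 1 + c₁ • A + c₂ • (A * A)) * U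
      = Matrix.diagonal (fun i => c₀ + c₁ * hA.eigenvalues i + c₂ * hA.eigenvalues i ^ 2) := by
    have h1 : star U * ((1 : Matrix (Fin n) (Fin n) ℝ)) * U = 1 := by
      rw [Matrix.mul_one]
      exact (Matrix.mem_unitaryGroup_iff').mp hA.eigenvectorUnitary.2
    simp only [Matrix.mul_add, Matrix.add_mul, Matrix.mul_smul, Matrix.smul_mul]
    rw [h1, hdiag, hAA, Matrix.diagonal_mul_diagonal]
    ext i j
    rcases eq_or_ne i j with rfl | hij
    · simp only [Matrix.add_apply, Matrix.smul_apply, Matrix.diagonal_apply_eq,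
        Matrix.one_apply_eq, smul_eq_mul, Pi.mul_apply]
      ring
    · simp only [Matrix.add_apply, Matrix.smul_apply, Matrix.diagonal_apply_ne _ hij,
        Matrix.one_apply_ne hij, smul_eq_mul, mul_zero, add_zero, zero_add]
  have : c₀ • 1 + c₁ • A + c₂ • (A * A)
      = U * Matrix.diagonal (fun i => c₀ + c₁ * hA.eigenvalues i + c₂ * hA.eigenvalues i ^ 2) * star U := by
    rw [← key, hsand]
  rw [this]
  have hdpsd : (Matrix.diagonal
      (fun i => c₀ + c₁ * hA.eigenvalues i + c₂ * hA.eigenvalues i ^ 2)).PosSemidef :=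
    Matrix.PosSemidef.diagonal h
  have hpsd2 := hdpsd.mul_mul_conjTranspose_same U
  rwa [← Matrix.star_eq_conjTranspose] at hpsd2

lemma eigMin_le {n : ℕ} {M : Matrix (Fin n) (Fin n) ℝ} (h : M.IsHermitian) (i : Fin n) :
    eigMin M ≤ h.eigenvalues i := by
  rw [eigMin, dif_pos h]
  exact ciInf_le (Finite.bddBelow_range _) i

lemma le_eigMax {n : ℕ} {M : Matrix (Fin n) (Fin n) ℝ} (h : M.IsHermitian) (i : Fin n) :
    h.eigenvalues i ≤ eigMax M := by
  rw [eigMax, dif_pos h]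
  exact le_ciSup (Finite.bddAbove_range _) i

lemma trace_sub_left {n : ℕ} {M₁ M₂ N : Matrix (Fin n) (Fin n) ℝ}
    (hN : N.PosSemidef) (h : (M₂ - M₁).PosSemidef) : (M₁ * N).trace ≤ (M₂ * N).trace := by
  have h0 := trace_mul_psd_nonneg h hN
  rw [Matrix.sub_mul, Matrix.trace_sub] at h0
  linarith

lemma trace_sub_right {n : ℕ} {M N₁ N₂ : Matrix (Fin n) (Fin n) ℝ}
    (hM : M.PosSemidef) (h : (N₂ - N₁).PosSemidef) : (M * N₁).trace ≤ (M * N₂).trace := by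
  have h0 := trace_mul_psd_nonneg hM h
  rw [Matrix.mul_sub, Matrix.trace_sub] at h0
  linarith

lemma sandwich {n : ℕ} {A N : Matrix (Fin n) (Fin n) ℝ} (hA : A.PosSemidef) (hN : N.PosSemidef)
    {γ Γ : ℝ} (hγ : ∀ i, γ ≤ hA.isHermitian.eigenvalues i)
    (hΓ : ∀ i, hA.isHermitian.eigenvalues i ≤ Γ) :
    γ * (A * N).trace ≤ (A * A * N).trace ∧ (A * A * N).trace ≤ Γ * (A * N).trace := by
  have e0 := hA.eigenvalues_nonneg
  have h1 : (A * A - γ • A).PosSemidef := by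
    have h := quadPSD hA.isHermitian 0 (-γ) 1 (fun i => by nlinarith [hγ i, e0 i])
    have e : (0:ℝ) • (1 : Matrix (Fin n) (Fin n) ℝ) + (-γ) • A + (1:ℝ) • (A * A)
        = A * A - γ • A := by module
    rwa [e] at h
  have h2 : (Γ • A - A * A).PosSemidef := by
    have h := quadPSD hA.isHermitian 0 Γ (-1) (fun i => by nlinarith [hΓ i, e0 i])
    have e : (0:ℝ) • (1 : Matrix (Fin n) (Fin n) ℝ) + Γ • A + (-1:ℝ) • (A * A)
        = Γ • A - A * A := by module
    rwa [e] at h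
  constructor
  · have := trace_sub_left hN h1
    rwa [smul_mul_assoc, Matrix.trace_smul, smul_eq_mul] at this
  · have := trace_sub_left hN h2
    rwa [smul_mul_assoc, Matrix.trace_smul, smul_eq_mul] at this

lemma smul_one_sub_psd {n : ℕ} {A : Matrix (Fin n) (Fin n) ℝ} (hA : A.PosSemidef)
    {Γ : ℝ} (hΓ : ∀ i, hA.isHermitian.eigenvalues i ≤ Γ) :
    (Γ • (1 : Matrix (Fin n) (Fin n) ℝ) - A).PosSemidef := by
  have h := quadPSD hA.isHermitian Γ (-1) 0 (fun i => by nlinarith [hΓ i])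
  have e : Γ • (1 : Matrix (Fin n) (Fin n) ℝ) + (-1:ℝ) • A + (0:ℝ) • (A * A)
      = Γ • 1 - A := by module
  rwa [e] at h

lemma crossUpper {n : ℕ} {A B : Matrix (Fin n) (Fin n) ℝ} (S : Matrix (Fin n) (Fin n) ℝ)
    (hA : A.PosSemidef) (hB : B.PosSemidef) {Γ : ℝ}
    (hΓ : ∀ i, hA.isHermitian.eigenvalues i ≤ Γ) :
    (B * (S * (A * Sᵀ))).trace ≤ Γ * (B * (S * Sᵀ)).trace := by
  have key : Γ • (S * Sᵀ) - S * (A * Sᵀ) = S * (Γ • (1 : Matrix (Fin n) (Fin n) ℝ) - A) * Sᵀ := by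
    simp only [Matrix.mul_sub, Matrix.sub_mul, mul_smul_comm, smul_mul_assoc,
      Matrix.mul_one, Matrix.mul_assoc]
  have h2 : (Γ • (S * Sᵀ) - S * (A * Sᵀ)).PosSemidef := by
    rw [key]
    exact psd_conj (smul_one_sub_psd hA hΓ) S
  have := trace_sub_right hB h2
  rwa [mul_smul_comm, Matrix.trace_smul, smul_eq_mul] at this

end Stmt12Aux


namespace Stmt12Aux
open Matrix

lemma tq {a b c d e f : ℕ} (X₁ : Matrix (Fin a) (Fin b) ℝ) (M : Matrix (Fin b) (Fin c) ℝ)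
    (Y₁ : Matrix (Fin d) (Fin c) ℝ) (X₂ : Matrix (Fin a) (Fin e) ℝ)
    (N : Matrix (Fin e) (Fin f) ℝ) (Y₂ : Matrix (Fin d) (Fin f) ℝ) :
    Matrix.trace ((X₁ * M * Y₁ᵀ)ᵀ * (X₂ * N * Y₂ᵀ))
      = Matrix.trace (Mᵀ * (X₁ᵀ * X₂ * (N * (Y₂ᵀ * Y₁)))) := by
  rw [show (X₁ * M * Y₁ᵀ)ᵀ * (X₂ * N * Y₂ᵀ)
      = Y₁ * (Mᵀ * (X₁ᵀ * (X₂ * (N * Y₂ᵀ)))) by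
    simp only [Matrix.transpose_mul, Matrix.transpose_transpose, Matrix.mul_assoc]]
  rw [Matrix.trace_mul_comm]
  simp only [Matrix.mul_assoc]

lemma frob_decomp {p q r k l : ℕ} (U : Matrix (Fin p) (Fin r) ℝ) (Up : Matrix (Fin p) (Fin k) ℝ)
    (V₀ : Matrix (Fin q) (Fin r) ℝ) (Vp : Matrix (Fin q) (Fin l) ℝ)
    (hU : Uᵀ * U = 1) (hUp : Upᵀ * Up = 1) (hUUp : Uᵀ * Up = 0)
    (hV : V₀ᵀ * V₀ = 1) (hVp : Vpᵀ * Vp = 1) (hVVp : V₀ᵀ * Vp = 0)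
    (K : Matrix (Fin r) (Fin r) ℝ) (E : Matrix (Fin r) (Fin l) ℝ) (F : Matrix (Fin k) (Fin r) ℝ) :
    frobSq (U * K * V₀ᵀ + U * E * Vpᵀ + Up * F * V₀ᵀ)
      = (Kᵀ * K).trace + (Eᵀ * E).trace + (Fᵀ * F).trace := by
  have hUpU : Upᵀ * U = 0 := by
    have := congrArg Matrix.transpose hUUp
    simpa [Matrix.transpose_mul] using this
  have hVpV : Vpᵀ * V₀ = 0 := by
    have := congrArg Matrix.transpose hVVp
    simpa [Matrix.transpose_mul] using this
  rw [frobSq]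
  simp only [Matrix.transpose_add, Matrix.add_mul, Matrix.mul_add, Matrix.trace_add]
  rw [tq U K V₀ U K V₀, tq U K V₀ U E Vp, tq U K V₀ Up F V₀,
      tq U E Vp U K V₀, tq U E Vp U E Vp, tq U E Vp Up F V₀,
      tq Up F V₀ U K V₀, tq Up F V₀ U E Vp, tq Up F V₀ Up F V₀]
  simp only [hU, hUp, hUUp, hV, hVp, hVVp, hUpU, hVpV, Matrix.one_mul, Matrix.mul_one,
    Matrix.zero_mul, Matrix.mul_zero, Matrix.trace_zero, add_zero, zero_add]

lemma gterm {p r k : ℕ} (W P : Matrix (Fin r) (Fin r) ℝ) (hWt : Wᵀ = W)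
    (hWd : IsUnit W.det) (hPd : IsUnit P.det)
    (U : Matrix (Fin p) (Fin r) ℝ) (Up : Matrix (Fin p) (Fin k) ℝ)
    (hU : Uᵀ * U = 1) (hUp : Upᵀ * Up = 1) (hUUp : Uᵀ * Up = 0)
    (S : Matrix (Fin r) (Fin r) ℝ) (D : Matrix (Fin k) (Fin r) ℝ) :
    Matrix.trace (W * ((U * S * P * W⁻¹ * Pᵀ + Up * D) * (P⁻¹)ᵀ)ᵀ
        * ((U * S * P * W⁻¹ * Pᵀ + Up * D) * (P⁻¹)ᵀ))
      = Matrix.trace ((P * W⁻¹ * Pᵀ) * (Sᵀ * S))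
        + Matrix.trace (((P⁻¹)ᵀ * W * P⁻¹) * (Dᵀ * D)) := by
  have hUpU : Upᵀ * U = 0 := by
    have := congrArg Matrix.transpose hUUp
    simpa [Matrix.transpose_mul] using this
  have hPP' : P⁻¹ * P = 1 := Matrix.nonsing_inv_mul _ hPd
  have hPP : P * P⁻¹ = 1 := Matrix.mul_nonsing_inv _ hPd
  have hWW : W * W⁻¹ = 1 := Matrix.mul_nonsing_inv _ hWd
  have hWit : (W⁻¹)ᵀ = W⁻¹ := by rw [Matrix.transpose_nonsing_inv, hWt]
  have hAt : (P * W⁻¹ * Pᵀ)ᵀ = P * W⁻¹ * Pᵀ := by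
    simp [Matrix.transpose_mul, hWit, Matrix.mul_assoc]
  have hA'A : ((P⁻¹)ᵀ * W * P⁻¹) * (P * W⁻¹ * Pᵀ) = 1 := by
    simp only [Matrix.mul_assoc]
    rw [← Matrix.mul_assoc P⁻¹ P, hPP', Matrix.one_mul,
        ← Matrix.mul_assoc W W⁻¹, hWW, Matrix.one_mul,
        ← Matrix.transpose_mul, hPP, Matrix.transpose_one]
  have hM : U * S * P * W⁻¹ * Pᵀ = U * S * (P * W⁻¹ * Pᵀ) := by
    simp only [Matrix.mul_assoc]
  rw [hM]
  set A : Matrix (Fin r) (Fin r) ℝ := P * W⁻¹ * Pᵀ with hAdef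
  set A' : Matrix (Fin r) (Fin r) ℝ := (P⁻¹)ᵀ * W * P⁻¹ with hA'def
  have key : W * ((U * S * A + Up * D) * (P⁻¹)ᵀ)ᵀ * ((U * S * A + Up * D) * (P⁻¹)ᵀ)
      = W * P⁻¹ * ((U * S * A + Up * D)ᵀ * (U * S * A + Up * D)) * (P⁻¹)ᵀ := by
    simp only [Matrix.transpose_mul, Matrix.transpose_transpose, Matrix.mul_assoc]
  have cUU : ∀ {k' : ℕ} (X : Matrix (Fin r) (Fin k') ℝ), Uᵀ * (U * X) = X := fun X => by
    rw [← Matrix.mul_assoc, hU, Matrix.one_mul]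
  have cUUp : ∀ {k' : ℕ} (X : Matrix (Fin k) (Fin k') ℝ), Uᵀ * (Up * X) = 0 := fun X => by
    rw [← Matrix.mul_assoc, hUUp, Matrix.zero_mul]
  have cUpU : ∀ {k' : ℕ} (X : Matrix (Fin r) (Fin k') ℝ), Upᵀ * (U * X) = 0 := fun X => by
    rw [← Matrix.mul_assoc, hUpU, Matrix.zero_mul]
  have cUpUp : ∀ {k' : ℕ} (X : Matrix (Fin k) (Fin k') ℝ), Upᵀ * (Up * X) = X := fun X => by
    rw [← Matrix.mul_assoc, hUp, Matrix.one_mul]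
  have hMM : (U * S * A + Up * D)ᵀ * (U * S * A + Up * D)
      = A * (Sᵀ * (S * A)) + Dᵀ * D := by
    simp only [Matrix.transpose_add, Matrix.transpose_mul, hAt, Matrix.add_mul,
      Matrix.mul_add, Matrix.mul_assoc]
    simp only [cUU, cUUp, cUpU, cUpUp, Matrix.mul_zero, Matrix.zero_mul,
      add_zero, zero_add]
  rw [key, hMM]
  have step : Matrix.trace (W * P⁻¹ * (A * (Sᵀ * (S * A)) + Dᵀ * D) * (P⁻¹)ᵀ)
      = Matrix.trace (A' * (A * (Sᵀ * (S * A)) + Dᵀ * D)) := by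
    rw [Matrix.trace_mul_comm]
    simp only [hA'def, Matrix.mul_assoc]
  rw [step, Matrix.mul_add, Matrix.trace_add]
  congr 1
  rw [← Matrix.mul_assoc A' A, hA'A, Matrix.one_mul]
  rw [← Matrix.mul_assoc, Matrix.trace_mul_comm]

end Stmt12Aux


namespace Stmt12Aux
open Matrix

lemma Kexpand {n : ℕ} {A B : Matrix (Fin n) (Fin n) ℝ} (hAt : Aᵀ = A) (hBt : Bᵀ = B)
    (S : Matrix (Fin n) (Fin n) ℝ) :
    ((B * S + S * A)ᵀ * (B * S + S * A)).trace
      = (B * B * (S * Sᵀ)).trace + 2 * (B * (S * (A * Sᵀ))).trace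
        + (A * A * (Sᵀ * S)).trace := by
  have e11 : (Sᵀ * (B * (B * S))).trace = (B * B * (S * Sᵀ)).trace := by
    rw [Matrix.trace_mul_comm]; simp only [Matrix.mul_assoc]
  have e12 : (Sᵀ * (B * (S * A))).trace = (B * (S * (A * Sᵀ))).trace := by
    rw [Matrix.trace_mul_comm]; simp only [Matrix.mul_assoc]
  have e21 : (A * (Sᵀ * (B * S))).trace = (B * (S * (A * Sᵀ))).trace := by
    rw [Matrix.trace_mul_comm]; simp only [Matrix.mul_assoc]
    exact e12
  have e22 : (A * (Sᵀ * (S * A))).trace = (A * A * (Sᵀ * S)).trace := by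
    have h1 : (A * (Sᵀ * (S * A))).trace = (Sᵀ * (S * (A * A))).trace := by
      rw [Matrix.trace_mul_comm]; simp only [Matrix.mul_assoc]
    have h2 : (A * A * (Sᵀ * S)).trace = (Sᵀ * (S * (A * A))).trace := by
      rw [Matrix.trace_mul_comm]; simp only [Matrix.mul_assoc]
    linarith
  simp only [Matrix.transpose_add, Matrix.transpose_mul, hAt, hBt, Matrix.add_mul,
    Matrix.mul_add, Matrix.trace_add, Matrix.mul_assoc]
  simp only [Matrix.mul_assoc] at e11 e22
  linarith

lemma core {n k l : ℕ} {A B A' B' : Matrix (Fin n) (Fin n) ℝ}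
    (hA : A.PosSemidef) (hB : B.PosSemidef) (hA' : A'.PosSemidef) (hB' : B'.PosSemidef)
    (hAt : Aᵀ = A) (hBt : Bᵀ = B) (hA't : A'ᵀ = A') (hB't : B'ᵀ = B')
    (hA'A : A' * A = 1) (hAA' : A * A' = 1) (hB'B : B' * B = 1) (hBB' : B * B' = 1)
    {γ Γ : ℝ}
    (hγA : ∀ i, γ ≤ hA.isHermitian.eigenvalues i) (hΓA : ∀ i, hA.isHermitian.eigenvalues i ≤ Γ)
    (hγB : ∀ i, γ ≤ hB.isHermitian.eigenvalues i) (hΓB : ∀ i, hB.isHermitian.eigenvalues i ≤ Γ)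
    (hΓ0 : 0 ≤ Γ)
    (S : Matrix (Fin n) (Fin n) ℝ) (D₁ : Matrix (Fin k) (Fin n) ℝ)
    (D₂ : Matrix (Fin l) (Fin n) ℝ) :
    γ * ((A * (Sᵀ * S)).trace + (A' * (D₁ᵀ * D₁)).trace
        + ((B * (S * Sᵀ)).trace + (B' * (D₂ᵀ * D₂)).trace))
      ≤ ((B * S + S * A)ᵀ * (B * S + S * A)).trace + (D₂ * D₂ᵀ).trace + (D₁ᵀ * D₁).trace
    ∧ ((B * S + S * A)ᵀ * (B * S + S * A)).trace + (D₂ * D₂ᵀ).trace + (D₁ᵀ * D₁).trace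
      ≤ 2 * Γ * ((A * (Sᵀ * S)).trace + (A' * (D₁ᵀ * D₁)).trace
        + ((B * (S * Sᵀ)).trace + (B' * (D₂ᵀ * D₂)).trace)) := by
  have hSSt : (S * Sᵀ).PosSemidef := by
    have := psd_tt Sᵀ; rwa [Matrix.transpose_transpose] at this
  have hStS : (Sᵀ * S).PosSemidef := psd_tt S
  have hN₁ : (A' * (D₁ᵀ * D₁) * A').PosSemidef := by
    have := psd_conj (psd_tt D₁) A'; rwa [hA't] at this
  have hN₂ : (B' * (D₂ᵀ * D₂) * B').PosSemidef := by
    have := psd_conj (psd_tt D₂) B'; rwa [hB't] at this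
  obtain ⟨sA1, sA2⟩ := sandwich hA hStS hγA hΓA
  obtain ⟨sB1, sB2⟩ := sandwich hB hSSt hγB hΓB
  obtain ⟨dA1, dA2⟩ := sandwich hA hN₁ hγA hΓA
  obtain ⟨dB1, dB2⟩ := sandwich hB hN₂ hγB hΓB
  have hd₁ : (A * A * (A' * (D₁ᵀ * D₁) * A')).trace = (D₁ᵀ * D₁).trace := by
    have h1 : A * A * (A' * (D₁ᵀ * D₁) * A') = A * (D₁ᵀ * (D₁ * A')) := by
      simp only [Matrix.mul_assoc]
      rw [← Matrix.mul_assoc A A', hAA', Matrix.one_mul]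
    rw [h1, Matrix.trace_mul_comm]
    simp only [Matrix.mul_assoc]
    rw [hA'A, Matrix.mul_one]
  have hu₁ : (A * (A' * (D₁ᵀ * D₁) * A')).trace = (A' * (D₁ᵀ * D₁)).trace := by
    have h1 : A * (A' * (D₁ᵀ * D₁) * A') = D₁ᵀ * (D₁ * A') := by
      simp only [Matrix.mul_assoc]
      rw [← Matrix.mul_assoc A A', hAA', Matrix.one_mul]
    rw [h1, Matrix.trace_mul_comm A' (D₁ᵀ * D₁)]
    simp only [Matrix.mul_assoc]
  have hd₂ : (B * B * (B' * (D₂ᵀ * D₂) * B')).trace = (D₂ᵀ * D₂).trace := by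
    have h1 : B * B * (B' * (D₂ᵀ * D₂) * B') = B * (D₂ᵀ * (D₂ * B')) := by
      simp only [Matrix.mul_assoc]
      rw [← Matrix.mul_assoc B B', hBB', Matrix.one_mul]
    rw [h1, Matrix.trace_mul_comm]
    simp only [Matrix.mul_assoc]
    rw [hB'B, Matrix.mul_one]
  have hu₂ : (B * (B' * (D₂ᵀ * D₂) * B')).trace = (B' * (D₂ᵀ * D₂)).trace := by
    have h1 : B * (B' * (D₂ᵀ * D₂) * B') = D₂ᵀ * (D₂ * B') := by
      simp only [Matrix.mul_assoc]
      rw [← Matrix.mul_assoc B B', hBB', Matrix.one_mul]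
    rw [h1, Matrix.trace_mul_comm B' (D₂ᵀ * D₂)]
    simp only [Matrix.mul_assoc]
  rw [hd₁, hu₁] at dA1 dA2
  rw [hd₂, hu₂] at dB1 dB2
  have hDD : (D₂ * D₂ᵀ).trace = (D₂ᵀ * D₂).trace := Matrix.trace_mul_comm _ _
  have hK := Kexpand hAt hBt S
  have x0 : 0 ≤ (B * (S * (A * Sᵀ))).trace := by
    refine trace_mul_psd_nonneg hB ?_
    have := psd_conj hA S; rwa [Matrix.mul_assoc] at this
  have xU1 : (B * (S * (A * Sᵀ))).trace ≤ Γ * (B * (S * Sᵀ)).trace :=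
    crossUpper S hA hB hΓA
  have xU2 : (B * (S * (A * Sᵀ))).trace ≤ Γ * (A * (Sᵀ * S)).trace := by
    have h := crossUpper Sᵀ hB hA hΓB
    rw [Matrix.transpose_transpose] at h
    have c1 : (A * (Sᵀ * (B * S))).trace = (Sᵀ * (B * (S * A))).trace := by
      rw [Matrix.trace_mul_comm]; simp only [Matrix.mul_assoc]
    have c2 : (Sᵀ * (B * (S * A))).trace = (B * (S * (A * Sᵀ))).trace := by
      rw [Matrix.trace_mul_comm]; simp only [Matrix.mul_assoc]
    linarith
  have tA0 : 0 ≤ (A * (Sᵀ * S)).trace := trace_mul_psd_nonneg hA hStS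
  have tB0 : 0 ≤ (B * (S * Sᵀ)).trace := trace_mul_psd_nonneg hB hSSt
  have uA0 : 0 ≤ (A' * (D₁ᵀ * D₁)).trace := trace_mul_psd_nonneg hA' (psd_tt D₁)
  have uB0 : 0 ≤ (B' * (D₂ᵀ * D₂)).trace := trace_mul_psd_nonneg hB' (psd_tt D₂)
  have hΓuA : 0 ≤ Γ * (A' * (D₁ᵀ * D₁)).trace := mul_nonneg hΓ0 uA0
  have hΓuB : 0 ≤ Γ * (B' * (D₂ᵀ * D₂)).trace := mul_nonneg hΓ0 uB0
  constructor
  · rw [hK, hDD]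
    nlinarith [sA1, sB1, dA1, dB1, x0]
  · rw [hK, hDD]
    nlinarith [sA2, sB2, dA2, dB2, xU1, xU2, hΓuA, hΓuB]

end Stmt12Aux


/-- Spectrum bounds for the map `(θ_L, θ_R) ↦ Lθ_Rᵀ + θ_LRᵀ` on the horizontal space of the
full-rank quotient geometry on fixed-rank matrices: `γ·g ≤ ‖Lθ_Rᵀ + θ_LRᵀ‖_F² ≤ 2Γ·g`. -/
theorem stmt12 {p₁ p₂ r : ℕ}
    (W V : Matrix (Fin r) (Fin r) ℝ) (hW : W.PosDef) (hV : V.PosDef)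
    (U : Matrix (Fin p₁) (Fin r) ℝ) (Uperp : Matrix (Fin p₁) (Fin (p₁ - r)) ℝ)
    (hU : Uᵀ * U = 1) (hUperp : Uperpᵀ * Uperp = 1) (hUUperp : Uᵀ * Uperp = 0)
    (V₀ : Matrix (Fin p₂) (Fin r) ℝ) (V₀perp : Matrix (Fin p₂) (Fin (p₂ - r)) ℝ)
    (hV₀ : V₀ᵀ * V₀ = 1) (hV₀perp : V₀perpᵀ * V₀perp = 1) (hV₀V₀perp : V₀ᵀ * V₀perp = 0)
    (P₁ P₂ : Matrix (Fin r) (Fin r) ℝ) (hP₁ : IsUnit P₁) (hP₂ : IsUnit P₂)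
    (L : Matrix (Fin p₁) (Fin r) ℝ) (hL : L = U * P₁)
    (R : Matrix (Fin p₂) (Fin r) ℝ) (hR : R = V₀ * P₂)
    (S : Matrix (Fin r) (Fin r) ℝ)
    (D₁ : Matrix (Fin (p₁ - r)) (Fin r) ℝ) (D₂ : Matrix (Fin (p₂ - r)) (Fin r) ℝ)
    (θL : Matrix (Fin p₁) (Fin r) ℝ)
    (hθL : θL = (U * S * P₂ * W⁻¹ * P₂ᵀ + Uperp * D₁) * (P₂⁻¹)ᵀ)
    (θR : Matrix (Fin p₂) (Fin r) ℝ)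
    (hθR : θR = (V₀ * Sᵀ * P₁ * V⁻¹ * P₁ᵀ + V₀perp * D₂) * (P₁⁻¹)ᵀ)
    (g : ℝ) (hg : g = Matrix.trace (W * θLᵀ * θL) + Matrix.trace (V * θRᵀ * θR))
    (γ Γ : ℝ)
    (hγ : γ = min (eigMin (P₂ * W⁻¹ * P₂ᵀ)) (eigMin (P₁ * V⁻¹ * P₁ᵀ)))
    (hΓ : Γ = max (eigMax (P₂ * W⁻¹ * P₂ᵀ)) (eigMax (P₁ * V⁻¹ * P₁ᵀ))) :
    γ * g ≤ frobSq (L * θRᵀ + θL * Rᵀ) ∧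
    frobSq (L * θRᵀ + θL * Rᵀ) ≤ 2 * Γ * g := by
  rcases Nat.eq_zero_or_pos r with hr | hr
  · subst hr
    have hz : L * θRᵀ + θL * Rᵀ = 0 := by
      ext i j
      simp [Matrix.add_apply, Matrix.mul_apply]
    have hg0 : g = 0 := by rw [hg]; simp [Matrix.trace]
    rw [hz, hg0]
    constructor <;> simp [frobSq]
  · subst hL hR hθL hθR
    have i₀ : Fin r := ⟨0, hr⟩
    have hWd : IsUnit W.det := isUnit_iff_ne_zero.mpr hW.det_pos.ne'
    have hVd : IsUnit V.det := isUnit_iff_ne_zero.mpr hV.det_pos.ne'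
    have hP₁d : IsUnit P₁.det := (Matrix.isUnit_iff_isUnit_det _).mp hP₁
    have hP₂d : IsUnit P₂.det := (Matrix.isUnit_iff_isUnit_det _).mp hP₂
    have hP₁i : P₁ * P₁⁻¹ = 1 := Matrix.mul_nonsing_inv _ hP₁d
    have hP₁i' : P₁⁻¹ * P₁ = 1 := Matrix.nonsing_inv_mul _ hP₁d
    have hP₂i : P₂ * P₂⁻¹ = 1 := Matrix.mul_nonsing_inv _ hP₂d
    have hP₂i' : P₂⁻¹ * P₂ = 1 := Matrix.nonsing_inv_mul _ hP₂d
    have hWi : W * W⁻¹ = 1 := Matrix.mul_nonsing_inv _ hWd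
    have hWi' : W⁻¹ * W = 1 := Matrix.nonsing_inv_mul _ hWd
    have hVi : V * V⁻¹ = 1 := Matrix.mul_nonsing_inv _ hVd
    have hVi' : V⁻¹ * V = 1 := Matrix.nonsing_inv_mul _ hVd
    have hWt : Wᵀ = W := by rw [← Stmt12Aux.ctt]; exact hW.isHermitian
    have hVt : Vᵀ = V := by rw [← Stmt12Aux.ctt]; exact hV.isHermitian
    have hWit : (W⁻¹)ᵀ = W⁻¹ := by rw [Matrix.transpose_nonsing_inv, hWt]
    have hVit : (V⁻¹)ᵀ = V⁻¹ := by rw [Matrix.transpose_nonsing_inv, hVt]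
    -- positive semidefiniteness
    have hA : (P₂ * W⁻¹ * P₂ᵀ).PosSemidef := Stmt12Aux.psd_conj hW.inv.posSemidef P₂
    have hB : (P₁ * V⁻¹ * P₁ᵀ).PosSemidef := Stmt12Aux.psd_conj hV.inv.posSemidef P₁
    have hA' : ((P₂⁻¹)ᵀ * W * P₂⁻¹).PosSemidef := by
      have := Stmt12Aux.psd_conj hW.posSemidef (P₂⁻¹)ᵀ
      rwa [Matrix.transpose_transpose] at this
    have hB' : ((P₁⁻¹)ᵀ * V * P₁⁻¹).PosSemidef := by
      have := Stmt12Aux.psd_conj hV.posSemidef (P₁⁻¹)ᵀ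
      rwa [Matrix.transpose_transpose] at this
    -- symmetry
    have hAt : (P₂ * W⁻¹ * P₂ᵀ)ᵀ = P₂ * W⁻¹ * P₂ᵀ := by
      simp [Matrix.transpose_mul, hWit, Matrix.mul_assoc]
    have hBt : (P₁ * V⁻¹ * P₁ᵀ)ᵀ = P₁ * V⁻¹ * P₁ᵀ := by
      simp [Matrix.transpose_mul, hVit, Matrix.mul_assoc]
    have hA't : ((P₂⁻¹)ᵀ * W * P₂⁻¹)ᵀ = (P₂⁻¹)ᵀ * W * P₂⁻¹ := by
      simp [Matrix.transpose_mul, hWt, Matrix.mul_assoc]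
    have hB't : ((P₁⁻¹)ᵀ * V * P₁⁻¹)ᵀ = (P₁⁻¹)ᵀ * V * P₁⁻¹ := by
      simp [Matrix.transpose_mul, hVt, Matrix.mul_assoc]
    -- inverse identities
    have hA'A : ((P₂⁻¹)ᵀ * W * P₂⁻¹) * (P₂ * W⁻¹ * P₂ᵀ) = 1 := by
      simp only [Matrix.mul_assoc]
      rw [← Matrix.mul_assoc P₂⁻¹ P₂, hP₂i', Matrix.one_mul,
          ← Matrix.mul_assoc W W⁻¹, hWi, Matrix.one_mul,
          ← Matrix.transpose_mul, hP₂i, Matrix.transpose_one]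
    have hAA' : (P₂ * W⁻¹ * P₂ᵀ) * ((P₂⁻¹)ᵀ * W * P₂⁻¹) = 1 := by
      simp only [Matrix.mul_assoc]
      rw [← Matrix.mul_assoc P₂ᵀ (P₂⁻¹)ᵀ, ← Matrix.transpose_mul, hP₂i', Matrix.transpose_one,
          Matrix.one_mul, ← Matrix.mul_assoc W⁻¹ W, hWi', Matrix.one_mul, hP₂i]
    have hB'B : ((P₁⁻¹)ᵀ * V * P₁⁻¹) * (P₁ * V⁻¹ * P₁ᵀ) = 1 := by
      simp only [Matrix.mul_assoc]
      rw [← Matrix.mul_assoc P₁⁻¹ P₁, hP₁i', Matrix.one_mul,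
          ← Matrix.mul_assoc V V⁻¹, hVi, Matrix.one_mul,
          ← Matrix.transpose_mul, hP₁i, Matrix.transpose_one]
    have hBB' : (P₁ * V⁻¹ * P₁ᵀ) * ((P₁⁻¹)ᵀ * V * P₁⁻¹) = 1 := by
      simp only [Matrix.mul_assoc]
      rw [← Matrix.mul_assoc P₁ᵀ (P₁⁻¹)ᵀ, ← Matrix.transpose_mul, hP₁i', Matrix.transpose_one,
          Matrix.one_mul, ← Matrix.mul_assoc V⁻¹ V, hVi', Matrix.one_mul, hP₁i]
    -- eigenvalue bounds
    have hγA : ∀ i, γ ≤ hA.isHermitian.eigenvalues i := fun i => by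
      rw [hγ]; exact (min_le_left _ _).trans (Stmt12Aux.eigMin_le hA.isHermitian i)
    have hγB : ∀ i, γ ≤ hB.isHermitian.eigenvalues i := fun i => by
      rw [hγ]; exact (min_le_right _ _).trans (Stmt12Aux.eigMin_le hB.isHermitian i)
    have hΓA : ∀ i, hA.isHermitian.eigenvalues i ≤ Γ := fun i => by
      rw [hΓ]; exact (Stmt12Aux.le_eigMax hA.isHermitian i).trans (le_max_left _ _)
    have hΓB : ∀ i, hB.isHermitian.eigenvalues i ≤ Γ := fun i => by
      rw [hΓ]; exact (Stmt12Aux.le_eigMax hB.isHermitian i).trans (le_max_right _ _)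
    have hΓ0 : 0 ≤ Γ := le_trans (hA.eigenvalues_nonneg i₀) (hΓA i₀)
    -- the g-term computations
    have gL := Stmt12Aux.gterm W P₂ hWt hWd hP₂d U Uperp hU hUperp hUUperp S D₁
    have gR := Stmt12Aux.gterm V P₁ hVt hVd hP₁d V₀ V₀perp hV₀ hV₀perp hV₀V₀perp Sᵀ D₂
    simp only [Matrix.transpose_transpose] at gR
    -- the decomposition of L θRᵀ + θL Rᵀ
    have cP₁ : ∀ {k' : ℕ} (X : Matrix (Fin r) (Fin k') ℝ), P₁ * (P₁⁻¹ * X) = X := fun X => by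
      rw [← Matrix.mul_assoc, hP₁i, Matrix.one_mul]
    have cP₂ : ∀ {k' : ℕ} (X : Matrix (Fin r) (Fin k') ℝ), (P₂⁻¹)ᵀ * (P₂ᵀ * X) = X := fun X => by
      rw [← Matrix.mul_assoc, ← Matrix.transpose_mul, hP₂i, Matrix.transpose_one, Matrix.one_mul]
    have hXeq : U * P₁ * ((V₀ * Sᵀ * P₁ * V⁻¹ * P₁ᵀ + V₀perp * D₂) * (P₁⁻¹)ᵀ)ᵀ
        + (U * S * P₂ * W⁻¹ * P₂ᵀ + Uperp * D₁) * (P₂⁻¹)ᵀ * (V₀ * P₂)ᵀ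
        = U * (P₁ * V⁻¹ * P₁ᵀ * S + S * (P₂ * W⁻¹ * P₂ᵀ)) * V₀ᵀ
          + U * D₂ᵀ * V₀perpᵀ + Uperp * D₁ * V₀ᵀ := by
      simp only [Matrix.transpose_add, Matrix.transpose_mul, Matrix.transpose_transpose,
        hVit, hWit, Matrix.mul_add, Matrix.add_mul, Matrix.mul_assoc]
      simp only [cP₁, cP₂]
      abel
    rw [hXeq, Stmt12Aux.frob_decomp U Uperp V₀ V₀perp hU hUperp hUUperp hV₀ hV₀perp hV₀V₀perp
      (P₁ * V⁻¹ * P₁ᵀ * S + S * (P₂ * W⁻¹ * P₂ᵀ)) D₂ᵀ D₁]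
    simp only [Matrix.transpose_transpose]
    rw [hg, gL, gR]
    exact Stmt12Aux.core hA hB hA' hB' hAt hBt hA't hB't hA'A hAA' hB'B hBB'
      hγA hΓA hγB hΓB hΓ0 S D₁ D₂
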